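/- If R₀ < 1, then the disease-free equilibrium of the dengue system is locally asymptotically stable: all eigenvalues of the Jacobian matrix of the system evaluated at (N_h, 0, 0, N_m, 0) have negative real parts. -/

import Mathlib

set_option maxRecDepth 8000
set_option maxHeartbeats 1000000

private lemma quad_root_re_neg (b c : ℝ) (hb : 0 < b) (hc : 0 < c) (z : ℂ)
    (h : z ^ 2 + (b : ℂ) * z + (c : ℂ) = 0) : z.re < 0 := by
  by_contra hre
  push_neg at hre
  have him : z.im * (2 * z.re + b) = 0 := by
    have := congrArg Complex.im h
    simp [Complex.add_im, Complex.mul_im, pow_two] at this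
    nlinarith [this]
  have hre2 : z.re ^ 2 - z.im ^ 2 + b * z.re + c = 0 := by
    have := congrArg Complex.re h
    simp [Complex.add_re, Complex.mul_re, pow_two] at this
    nlinarith [this]
  rcases mul_eq_zero.mp him with h1 | h2
  · nlinarith
  · nlinarith

private lemma det_factor (z μh μm ηh b c : ℂ) :
    (!![z+μh,0,0,0,b; 0,z+(ηh+μh),0,0,-b; 0,-ηh,z+μh,0,0; 0,c,0,z+μm,0; 0,-c,0,0,z+μm]).det
      = (z+μh)^2*(z+μm)*((z+(ηh+μh))*(z+μm) - b*c) := by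
  simp [Matrix.det_succ_row_zero, Fin.sum_univ_succ, Matrix.submatrix_apply, Fin.succAbove,
    Matrix.vecHead, Matrix.vecTail]
  ring

/-- If `R₀ < 1`, every eigenvalue of the Jacobian of the dengue system at the
disease-free equilibrium `(N_h, 0, 0, N_m, 0)` has negative real part. -/
theorem disease_free_locally_stable
    (B βmh βhm μh μm ηh Nh Nm : ℝ)
    (hB : 0 < B) (hβmh : 0 < βmh) (hβhm : 0 < βhm)
    (hμh : 0 < μh) (hμm : 0 < μm) (hηh : 0 < ηh)
    (hNh : 0 < Nh) (hNm : 0 < Nm)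
    (hR0 : Real.sqrt (B ^ 2 * βhm * βmh * Nm / ((ηh + μh) * μm * Nh)) < 1)
    (J : Matrix (Fin 5) (Fin 5) ℝ)
    (hJ : J = !![-μh, 0, 0, 0, -(B * βmh);
                 0, -(ηh + μh), 0, 0, B * βmh;
                 0, ηh, -μh, 0, 0;
                 0, -(B * βhm * Nm / Nh), 0, -μm, 0;
                 0, B * βhm * Nm / Nh, 0, 0, -μm]) :
    ∀ z ∈ spectrum ℂ (J.map (Complex.ofReal)), z.re < 0 := by
  subst hJ
  intro z hz
  -- the determinant of `z•1 - J` vanishes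
  have hdet : (Matrix.diagonal (fun _ : Fin 5 => z) - Matrix.map
      !![-μh, 0, 0, 0, -(B * βmh);
         0, -(ηh + μh), 0, 0, B * βmh;
         0, ηh, -μh, 0, 0;
         0, -(B * βhm * Nm / Nh), 0, -μm, 0;
         0, B * βhm * Nm / Nh, 0, 0, -μm] Complex.ofReal).det = 0 := by
    have h := spectrum.mem_iff.mp hz
    rw [Matrix.algebraMap_eq_diagonal] at h
    by_contra hd
    exact h ((Matrix.isUnit_iff_isUnit_det _).mpr (isUnit_iff_ne_zero.mpr hd))
  set b : ℝ := B * βmh with hb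
  set c : ℝ := B * βhm * Nm / Nh with hcdef
  have hmat : (Matrix.diagonal (fun _ : Fin 5 => z) - Matrix.map
      !![-μh, 0, 0, 0, -(B * βmh);
         0, -(ηh + μh), 0, 0, B * βmh;
         0, ηh, -μh, 0, 0;
         0, -(B * βhm * Nm / Nh), 0, -μm, 0;
         0, B * βhm * Nm / Nh, 0, 0, -μm] Complex.ofReal)
      = !![z+(μh:ℂ),0,0,0,(b:ℂ); 0,z+((ηh:ℂ)+(μh:ℂ)),0,0,-(b:ℂ);
           0,-(ηh:ℂ),z+(μh:ℂ),0,0; 0,(c:ℂ),0,z+(μm:ℂ),0; 0,-(c:ℂ),0,0,z+(μm:ℂ)] := by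
    ext i j
    fin_cases i <;> fin_cases j <;>
      simp [Matrix.diagonal_apply, Matrix.vecHead, Matrix.vecTail, hb, hcdef] <;>
      push_cast <;> ring
  rw [hmat, det_factor] at hdet
  -- positivity facts
  have hc : 0 < c := by positivity
  have hbcpos : 0 < b * c := by positivity
  have hK : b * c < (ηh + μh) * μm := by
    have hargpos : 0 < B ^ 2 * βhm * βmh * Nm / ((ηh + μh) * μm * Nh) := by positivity
    have harg : B ^ 2 * βhm * βmh * Nm / ((ηh + μh) * μm * Nh) < 1 := by
      nlinarith [Real.sq_sqrt hargpos.le, Real.sqrt_nonneg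
        (B ^ 2 * βhm * βmh * Nm / ((ηh + μh) * μm * Nh)), hR0]
    have hden : 0 < (ηh + μh) * μm * Nh := by positivity
    have := (div_lt_one hden).mp harg
    have hbc : b * c = B ^ 2 * βhm * βmh * Nm / Nh := by
      field_simp [hb, hcdef]; rw [hb, hcdef]; field_simp
    rw [hbc]
    rw [div_lt_iff₀ hNh]
    nlinarith [this]
  rcases mul_eq_zero.mp hdet with h1 | h2
  · rcases mul_eq_zero.mp h1 with h3 | h4
    · have : z + (μh : ℂ) = 0 := by
        have := pow_eq_zero_iff (n := 2) (by norm_num) |>.mp h3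
        exact this
      have : z = -(μh : ℂ) := by linear_combination this
      rw [this]
      simpa using hμh
    · have : z = -(μm : ℂ) := by linear_combination h4
      rw [this]
      simpa using hμm
  · -- quadratic factor
    have hq : z ^ 2 + ((ηh + μh + μm : ℝ) : ℂ) * z + (((ηh + μh) * μm - b * c : ℝ) : ℂ) = 0 := by
      push_cast
      linear_combination h2
    exact quad_root_re_neg (ηh + μh + μm) ((ηh + μh) * μm - b * c)
      (by positivity) (by linarith) z hq
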